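/- For every n ∈ ℕ with n ≥ 1 and every pair of symmetric d×d real matrices S and R, one has (S|S|^{1/n − 1} − R|R|^{1/n − 1}) : (S − R) ≥ (1/n)|S − R|² ∫₀¹ |R + θ(S − R)|^{1/n − 1} dθ ≥ 0, where the convention 0·|0|^{1/n−1} = 0 is used; moreover the left-hand side vanishes if and only if S = R. -/

import Mathlib

open scoped BigOperators

/-- The Frobenius norm of a real matrix. -/
noncomputable def fnorm {d : ℕ} (A : Matrix (Fin d) (Fin d) ℝ) : ℝ :=
  Real.sqrt (∑ i, ∑ j, (A i j) ^ 2)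

/-- The Frobenius inner product `A : B` of two real matrices. -/
def finner {d : ℕ} (A B : Matrix (Fin d) (Fin d) ℝ) : ℝ :=
  ∑ i, ∑ j, A i j * B i j

open MeasureTheory intervalIntegral Set Filter
open scoped InnerProductSpace

lemma abs_rpow_II {e : ℝ} (he : -1 < e) (c a b : ℝ) :
    IntervalIntegrable (fun t : ℝ => |t - c| ^ e) volume a b := by
  have hmeas : Measurable (fun s : ℝ => |s| ^ e) := by measurability
  have base : ∀ A : ℝ, IntervalIntegrable (fun s : ℝ => |s| ^ e) volume 0 A := by
    have base' : ∀ A : ℝ, 0 ≤ A → IntervalIntegrable (fun s : ℝ => |s| ^ e) volume 0 A := by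
      intro A hA
      apply IntervalIntegrable.mono_fun' (g := fun s : ℝ => s ^ e)
        (intervalIntegrable_rpow' he)
      · exact hmeas.aestronglyMeasurable
      · rw [Set.uIoc_of_le hA]
        filter_upwards [ae_restrict_mem measurableSet_Ioc] with s hs
        simp [abs_of_pos hs.1, abs_of_nonneg (Real.rpow_nonneg hs.1.le e)]
    intro A
    rcases le_total 0 A with hA | hA
    · exact base' A hA
    · have := (IntervalIntegrable.iff_comp_neg (by simp)).mp (base' (-A) (by linarith))
      simpa using this
  have : IntervalIntegrable (fun s : ℝ => |s| ^ e) volume (a - c) (b - c) :=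
    ((base (a - c)).symm.trans (base (b - c)))
  simpa using this.comp_sub_right c

set_option maxHeartbeats 1000000 in
lemma key_ineq {E : Type*} [NormedAddCommGroup E] [InnerProductSpace ℝ E]
    (p : ℝ) (hp : 0 < p) (hp1 : p < 1) (x y : E) (hxy : x ≠ y) :
    p * ‖x - y‖ ^ 2 * (∫ θ in (0:ℝ)..1, ‖y + θ • (x - y)‖ ^ (p - 1)) ≤
      ‖x‖ ^ (p - 1) * ⟪x, x - y⟫_ℝ - ‖y‖ ^ (p - 1) * ⟪y, x - y⟫_ℝ ∧
    0 < p * ‖x - y‖ ^ 2 * (∫ θ in (0:ℝ)..1, ‖y + θ • (x - y)‖ ^ (p - 1)) := by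
  set h : E := x - y with hh_def
  have hh : h ≠ 0 := sub_ne_zero.mpr hxy
  have hhn : 0 < ‖h‖ := norm_pos_iff.mpr hh
  set z : ℝ → E := fun θ => y + θ • h with hz_def
  set q : ℝ → ℝ := fun θ => ‖y‖ ^ 2 + 2 * ⟪y, h⟫_ℝ * θ + ‖h‖ ^ 2 * θ ^ 2 with hq_def
  set r : ℝ → ℝ := fun θ => ⟪y, h⟫_ℝ + θ * ‖h‖ ^ 2 with hr_def
  have hq_eq : ∀ θ, q θ = ‖z θ‖ ^ 2 := by
    intro θ
    simp only [hq_def, hz_def]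
    rw [norm_add_sq_real, real_inner_smul_right, norm_smul]
    simp [mul_pow, sq_abs]
    ring
  have hr_eq : ∀ θ, r θ = ⟪z θ, h⟫_ℝ := by
    intro θ
    simp only [hr_def, hz_def]
    rw [inner_add_left, real_inner_smul_left, real_inner_self_eq_norm_sq]
  have hq_nonneg : ∀ θ, 0 ≤ q θ := fun θ => by rw [hq_eq]; positivity
  have hCS : ∀ θ, (r θ) ^ 2 ≤ q θ * ‖h‖ ^ 2 := by
    intro θ
    rw [hr_eq, hq_eq]
    have h1 := abs_real_inner_le_norm (z θ) h
    nlinarith [abs_nonneg (⟪z θ, h⟫_ℝ), sq_abs (⟪z θ, h⟫_ℝ), norm_nonneg (z θ), norm_nonneg h]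
  have hz_zero : ∀ θ, q θ = 0 → z θ = 0 := by
    intro θ hθ
    have := hq_eq θ ▸ hθ
    have : ‖z θ‖ = 0 := by nlinarith [norm_nonneg (z θ)]
    simpa using this
  have hq_unique : ∀ θ₁ θ₂, q θ₁ = 0 → q θ₂ = 0 → θ₁ = θ₂ := by
    intro θ₁ θ₂ h1 h2
    have e1 := hz_zero θ₁ h1
    have e2 := hz_zero θ₂ h2
    have e12 : z θ₁ = z θ₂ := by rw [e1, e2]
    simp only [hz_def] at e12
    have h3 := add_left_cancel e12
    have h4 : (θ₁ - θ₂) • h = 0 := by rw [sub_smul, h3, sub_self]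
    rcases smul_eq_zero.mp h4 with h' | h'
    · have := sub_eq_zero.mp (by simpa using h' : θ₁ - θ₂ = (0:ℝ))
      linarith
    · exact absurd h' hh
  have hq_cont : Continuous q := by fun_prop
  have hr_cont : Continuous r := by fun_prop
  set B : ℝ → ℝ := fun θ => q θ ^ ((p - 1) / 2) with hB_def
  set G : ℝ → ℝ := fun θ =>
    (p - 1) * q θ ^ ((p - 3) / 2) * (r θ) ^ 2 + q θ ^ ((p - 1) / 2) * ‖h‖ ^ 2 with hG_def
  set g : ℝ → ℝ := fun θ => q θ ^ ((p - 1) / 2) * r θ with hg_def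
  have hpow : ∀ v : E, (‖v‖ ^ 2 : ℝ) ^ ((p - 1) / 2) = ‖v‖ ^ (p - 1) := by
    intro v
    rw [← Real.rpow_natCast ‖v‖ 2, ← Real.rpow_mul (norm_nonneg v)]
    norm_num
    congr 1
    ring
  have hBz : ∀ θ, ‖z θ‖ ^ (p - 1) = B θ := by
    intro θ; rw [hB_def]; simp only [hq_eq θ, hpow (z θ)]
  -- derivative facts
  have hq_deriv : ∀ θ, HasDerivAt q (2 * r θ) θ := by
    intro θ
    have h1 : HasDerivAt (fun t : ℝ => ‖y‖ ^ 2 + 2 * ⟪y, h⟫_ℝ * t + ‖h‖ ^ 2 * t ^ 2)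
        (2 * ⟪y, h⟫_ℝ * 1 + ‖h‖ ^ 2 * (2 * θ ^ 1)) θ := by
      exact (((hasDerivAt_id θ).const_mul (2 * ⟪y, h⟫_ℝ)).const_add (‖y‖ ^ 2)).add
        ((hasDerivAt_pow 2 θ).const_mul (‖h‖ ^ 2))
    convert h1 using 1
    simp [hr_def]; ring
  have hr_deriv : ∀ θ, HasDerivAt r (‖h‖ ^ 2) θ := by
    intro θ
    have h1 : HasDerivAt (fun t : ℝ => ⟪y, h⟫_ℝ + t * ‖h‖ ^ 2) (1 * ‖h‖ ^ 2) θ :=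
      ((hasDerivAt_id θ).mul_const (‖h‖ ^ 2)).const_add _
    simpa only [one_mul] using h1
  have hg_deriv : ∀ θ, q θ ≠ 0 → HasDerivAt g (G θ) θ := by
    intro θ hq
    have h1 : HasDerivAt (fun t => q t ^ ((p - 1) / 2))
        (2 * r θ * ((p - 1) / 2) * q θ ^ ((p - 1) / 2 - 1)) θ :=
      (hq_deriv θ).rpow_const (Or.inl hq)
    have h2 := (h1.mul (hr_deriv θ))
    have he : (p - 1) / 2 - 1 = (p - 3) / 2 := by ring
    have hGe : G θ = 2 * r θ * ((p - 1) / 2) * q θ ^ ((p - 1) / 2 - 1) * r θ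
        + q θ ^ ((p - 1) / 2) * ‖h‖ ^ 2 := by
      simp only [hG_def, he]
      ring
    rw [hGe]
    exact h2
  -- auxiliary: q^((p-3)/2) * r^2 ≤ B * ‖h‖^2
  have hX : ∀ θ, q θ ^ ((p - 3) / 2) * (r θ) ^ 2 ≤ B θ * ‖h‖ ^ 2 := by
    intro θ
    by_cases hq : q θ = 0
    · have hr0 : r θ = 0 := by nlinarith [hCS θ, sq_nonneg (r θ)]
      calc q θ ^ ((p - 3) / 2) * (r θ) ^ 2 = 0 := by rw [hr0]; ring
        _ ≤ B θ * ‖h‖ ^ 2 := mul_nonneg (Real.rpow_nonneg (hq_nonneg θ) _) (sq_nonneg _)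
    · have hqpos : 0 < q θ := lt_of_le_of_ne (hq_nonneg θ) (Ne.symm hq)
      have step : q θ ^ ((p - 3) / 2) * (r θ) ^ 2 ≤ q θ ^ ((p - 3) / 2) * (q θ * ‖h‖ ^ 2) :=
        mul_le_mul_of_nonneg_left (hCS θ) (Real.rpow_nonneg (hq_nonneg θ) _)
      have hqq : q θ ^ ((p - 3) / 2) * q θ = q θ ^ ((p - 1) / 2) := by
        nth_rewrite 2 [← Real.rpow_one (q θ)]
        rw [← Real.rpow_add hqpos]
        congr 1; ring
      calc q θ ^ ((p - 3) / 2) * (r θ) ^ 2 ≤ q θ ^ ((p - 3) / 2) * (q θ * ‖h‖ ^ 2) := step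
        _ = (q θ ^ ((p - 3) / 2) * q θ) * ‖h‖ ^ 2 := by ring
        _ = B θ * ‖h‖ ^ 2 := by rw [hqq]
  have hB_nonneg : ∀ θ, 0 ≤ B θ := fun θ => Real.rpow_nonneg (hq_nonneg θ) _
  have hX_nonneg : ∀ θ, 0 ≤ q θ ^ ((p - 3) / 2) * (r θ) ^ 2 :=
    fun θ => mul_nonneg (Real.rpow_nonneg (hq_nonneg θ) _) (sq_nonneg _)
  have hbound : ∀ θ, p * ‖h‖ ^ 2 * B θ ≤ G θ := by
    intro θ
    have h1 := hX θ
    have h2 := hX_nonneg θ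
    rw [hG_def]
    nlinarith [hB_nonneg θ]
  have hGabs : ∀ θ, |G θ| ≤ (2 - p) * ‖h‖ ^ 2 * B θ := by
    intro θ
    rw [hG_def, abs_le]
    constructor
    · nlinarith [hX θ, hX_nonneg θ, hB_nonneg θ]
    · nlinarith [hX θ, hX_nonneg θ, hB_nonneg θ]
  -- continuity of g
  have hg_cont : Continuous g := by
    rw [continuous_iff_continuousAt]
    intro θ
    by_cases hq : q θ = 0
    · have hr0 : r θ = 0 := by nlinarith [hCS θ, sq_nonneg (r θ)]
      have hgθ : g θ = 0 := by rw [hg_def]; simp [hr0]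
      have bound : ∀ t, ‖g t‖ ≤ ‖h‖ * q t ^ (p / 2) := by
        intro t
        by_cases hqt : q t = 0
        · have hrt : r t = 0 := by nlinarith [hCS t, sq_nonneg (r t)]
          have hgt : g t = 0 := by rw [hg_def]; simp [hrt]
          rw [hgt]
          simp only [norm_zero]
          positivity
        · have hqpos : 0 < q t := lt_of_le_of_ne (hq_nonneg t) (Ne.symm hqt)
          have hs : Real.sqrt (q t) ^ 2 = q t := Real.sq_sqrt (hq_nonneg t)
          have hspos : 0 < Real.sqrt (q t) := Real.sqrt_pos.mpr hqpos
          have hr_le : |r t| ≤ Real.sqrt (q t) * ‖h‖ := by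
            nlinarith [hCS t, abs_nonneg (r t), sq_abs (r t), norm_nonneg h,
              mul_nonneg hspos.le (norm_nonneg h)]
          have h1 : ‖g t‖ = q t ^ ((p - 1) / 2) * |r t| := by
            rw [hg_def, Real.norm_eq_abs, abs_mul,
              abs_of_nonneg (Real.rpow_nonneg (hq_nonneg t) _)]
          rw [h1]
          have h2 : q t ^ ((p - 1) / 2) * |r t| ≤ q t ^ ((p - 1) / 2) * (Real.sqrt (q t) * ‖h‖) :=
            mul_le_mul_of_nonneg_left hr_le (Real.rpow_nonneg (hq_nonneg t) _)
          have h3 : q t ^ ((p - 1) / 2) * Real.sqrt (q t) = q t ^ (p / 2) := by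
            rw [Real.sqrt_eq_rpow, ← Real.rpow_add hqpos]
            congr 1; ring
          calc q t ^ ((p - 1) / 2) * |r t| ≤ q t ^ ((p - 1) / 2) * (Real.sqrt (q t) * ‖h‖) := h2
            _ = (q t ^ ((p - 1) / 2) * Real.sqrt (q t)) * ‖h‖ := by ring
            _ = ‖h‖ * q t ^ (p / 2) := by rw [h3]; ring
      have htend : Tendsto (fun t => ‖h‖ * q t ^ (p / 2)) (nhds θ) (nhds 0) := by
        have hc : ContinuousAt (fun t => q t ^ (p / 2)) θ :=
          (Real.continuousAt_rpow_const (q θ) (p / 2) (Or.inr (by positivity))).comp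
            hq_cont.continuousAt
        have h0 : q θ ^ (p / 2) = 0 := by
          rw [hq, Real.zero_rpow (by positivity : p / 2 ≠ 0)]
        have := hc.tendsto
        rw [h0] at this
        simpa using this.const_mul ‖h‖
      unfold ContinuousAt
      rw [hgθ]
      exact squeeze_zero_norm bound htend
    · exact ((Real.continuousAt_rpow_const (q θ) _ (Or.inl hq)).comp
        hq_cont.continuousAt).mul hr_cont.continuousAt
  -- integrability
  have hqm : Measurable q := hq_cont.measurable
  have hrm : Measurable r := hr_cont.measurable
  have hB_meas : Measurable B := hqm.pow measurable_const
  have hG_meas : Measurable G := ((measurable_const.mul (hqm.pow measurable_const)).mul (hrm.pow measurable_const)).add ((hqm.pow measurable_const).mul measurable_const)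
  have hB_int : IntervalIntegrable B volume 0 1 := by
    by_cases hex : ∃ t, q t = 0
    · obtain ⟨t0, ht0⟩ := hex
      have e0 : z t0 = 0 := hz_zero t0 ht0
      have hy : y = -(t0 • h) := by
        have hE : y + t0 • h = 0 := by
          have := e0
          simp only [hz_def] at this
          exact this
        exact eq_neg_of_add_eq_zero_left hE
      have hzform : ∀ t, q t = ‖h‖ ^ 2 * (t - t0) ^ 2 := by
        intro t
        have hzt : z t = (t - t0) • h := by
          rw [hz_def]
          simp only
          rw [hy, sub_smul]
          abel
        rw [hq_eq t, hzt, norm_smul]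
        simp [mul_pow, sq_abs]
        ring
      have hBform : B = fun t => (‖h‖ ^ 2) ^ ((p - 1) / 2) * |t - t0| ^ (p - 1) := by
        funext t
        rw [hB_def]
        simp only
        rw [hzform t, Real.mul_rpow (sq_nonneg _) (sq_nonneg _)]
        congr 1
        rw [← sq_abs (t - t0), ← Real.rpow_natCast |t - t0| 2,
          ← Real.rpow_mul (abs_nonneg _)]
        congr 1
        push_cast
        ring
      rw [hBform]
      exact (abs_rpow_II (by linarith) t0 0 1).const_mul _
    · push_neg at hex
      apply Continuous.intervalIntegrable
      rw [continuous_iff_continuousAt]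
      exact fun t => (Real.continuousAt_rpow_const (q t) _ (Or.inl (hex t))).comp
        hq_cont.continuousAt
  have hG_int : IntervalIntegrable G volume 0 1 := by
    apply IntervalIntegrable.mono_fun' (hB_int.const_mul ((2 - p) * ‖h‖ ^ 2))
      hG_meas.aestronglyMeasurable
    exact Filter.Eventually.of_forall fun t => by
      simpa [Real.norm_eq_abs] using hGabs t
  -- FTC
  have hFTC : ∫ t in (0:ℝ)..1, G t = g 1 - g 0 := by
    by_cases hmid : ∃ t0 ∈ Ioo (0:ℝ) 1, q t0 = 0
    · obtain ⟨t0, ht0, hq0⟩ := hmid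
      have hne : ∀ t, t ≠ t0 → q t ≠ 0 := fun t ht hcon => ht (hq_unique t t0 hcon hq0)
      have i1 : IntervalIntegrable G volume 0 t0 := hG_int.mono_set
        (by rw [uIcc_of_le ht0.1.le, uIcc_of_le (zero_le_one' ℝ)]
            exact Icc_subset_Icc le_rfl ht0.2.le)
      have i2 : IntervalIntegrable G volume t0 1 := hG_int.mono_set
        (by rw [uIcc_of_le ht0.2.le, uIcc_of_le (zero_le_one' ℝ)]
            exact Icc_subset_Icc ht0.1.le le_rfl)
      have e1 : ∫ t in (0:ℝ)..t0, G t = g t0 - g 0 :=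
        integral_eq_sub_of_hasDerivAt_of_le ht0.1.le hg_cont.continuousOn
          (fun t ht => hg_deriv t (hne t (ne_of_lt ht.2))) i1
      have e2 : ∫ t in t0..(1:ℝ), G t = g 1 - g t0 :=
        integral_eq_sub_of_hasDerivAt_of_le ht0.2.le hg_cont.continuousOn
          (fun t ht => hg_deriv t (hne t (ne_of_gt ht.1))) i2
      rw [← integral_add_adjacent_intervals i1 i2, e1, e2]
      ring
    · push_neg at hmid
      exact integral_eq_sub_of_hasDerivAt_of_le (zero_le_one' ℝ) hg_cont.continuousOn
        (fun t ht => hg_deriv t (hmid t ht)) hG_int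
  -- identification of the integrand
  have hIeq : (∫ θ in (0:ℝ)..1, ‖y + θ • h‖ ^ (p - 1)) = ∫ θ in (0:ℝ)..1, B θ := by
    apply integral_congr
    intro t _
    have hBt := hBz t
    simp only [hz_def] at hBt
    exact hBt
  -- endpoints
  have hz1 : z 1 = x := by rw [hz_def]; simp [hh_def]
  have hz0 : z 0 = y := by rw [hz_def]; simp
  have hg1 : g 1 = ‖x‖ ^ (p - 1) * ⟪x, h⟫_ℝ := by
    rw [hg_def]
    simp only
    rw [show q 1 = ‖x‖ ^ 2 by rw [hq_eq 1, hz1],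
      show r 1 = ⟪x, h⟫_ℝ by rw [hr_eq 1, hz1], hpow]
  have hg0 : g 0 = ‖y‖ ^ (p - 1) * ⟪y, h⟫_ℝ := by
    rw [hg_def]
    simp only
    rw [show q 0 = ‖y‖ ^ 2 by rw [hq_eq 0, hz0],
      show r 0 = ⟪y, h⟫_ℝ by rw [hr_eq 0, hz0], hpow]
  have hmono : p * ‖h‖ ^ 2 * (∫ t in (0:ℝ)..1, B t) ≤ g 1 - g 0 := by
    have h1 : ∫ t in (0:ℝ)..1, p * ‖h‖ ^ 2 * B t ≤ ∫ t in (0:ℝ)..1, G t :=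
      integral_mono_on (zero_le_one' ℝ) (hB_int.const_mul _) hG_int (fun t _ => hbound t)
    rw [intervalIntegral.integral_const_mul, hFTC] at h1
    exact h1
  constructor
  · rw [hIeq]
    rw [hg1, hg0] at hmono
    linarith
  · -- positivity
    set M : ℝ := ‖y‖ + ‖h‖ with hM_def
    have hM : 0 < M := by have := norm_nonneg y; simp only [hM_def]; linarith
    have hqM : ∀ t ∈ Icc (0:ℝ) 1, q t ≤ M ^ 2 := by
      intro t ht
      rw [hq_eq]
      have hzM : ‖z t‖ ≤ M := by
        rw [hz_def]
        simp only
        calc ‖y + t • h‖ ≤ ‖y‖ + ‖t • h‖ := norm_add_le _ _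
          _ = ‖y‖ + |t| * ‖h‖ := by rw [norm_smul, Real.norm_eq_abs]
          _ ≤ ‖y‖ + 1 * ‖h‖ := by
              have habs : |t| ≤ 1 := abs_le.mpr ⟨by linarith [ht.1], ht.2⟩
              nlinarith [norm_nonneg h]
          _ = M := by rw [hM_def]; ring
      nlinarith [norm_nonneg (z t)]
    have hc : (0:ℝ) < (M ^ 2) ^ ((p - 1) / 2) := Real.rpow_pos_of_pos (by positivity) _
    have hae : ∀ᵐ t ∂(volume.restrict (Icc (0:ℝ) 1)),
        (fun _ => (M ^ 2) ^ ((p - 1) / 2)) t ≤ B t := by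
      have hnull : (volume : Measure ℝ) {t | q t = 0} = 0 :=
        Set.Subsingleton.measure_zero (fun a ha b hb => hq_unique a b ha hb) _
      have h1 : ∀ᵐ t ∂(volume : Measure ℝ), q t ≠ 0 := by
        rw [ae_iff]
        simpa using hnull
      filter_upwards [ae_restrict_of_ae h1, ae_restrict_mem measurableSet_Icc] with t h1t h2t
      exact Real.rpow_le_rpow_of_nonpos (lt_of_le_of_ne (hq_nonneg t) (Ne.symm h1t))
        (hqM t h2t) (by linarith)
    have hint : (M ^ 2) ^ ((p - 1) / 2) ≤ ∫ t in (0:ℝ)..1, B t := by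
      have h2 := integral_mono_ae_restrict (μ := volume) (zero_le_one' ℝ)
        (_root_.intervalIntegrable_const (c := (M ^ 2) ^ ((p - 1) / 2))) hB_int hae
      simpa using h2
    rw [hIeq]
    have hBpos : 0 < ∫ t in (0:ℝ)..1, B t := lt_of_lt_of_le hc hint
    have hh2 : 0 < ‖h‖ ^ 2 := by positivity
    exact mul_pos (mul_pos hp hh2) hBpos

def toE {d : ℕ} (A : Matrix (Fin d) (Fin d) ℝ) : EuclideanSpace ℝ (Fin d × Fin d) :=
  WithLp.toLp 2 (fun ij : Fin d × Fin d => A ij.1 ij.2)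

lemma norm_toE {d : ℕ} (A : Matrix (Fin d) (Fin d) ℝ) : ‖toE A‖ = fnorm A := by
  rw [EuclideanSpace.norm_eq, fnorm]
  congr 1
  rw [Fintype.sum_prod_type]
  simp [toE, Real.norm_eq_abs, sq_abs]

lemma inner_toE {d : ℕ} (A B : Matrix (Fin d) (Fin d) ℝ) :
    ⟪toE A, toE B⟫_ℝ = finner A B := by
  rw [finner]
  rw [PiLp.inner_apply]
  rw [Fintype.sum_prod_type]
  simp [toE, RCLike.inner_apply, mul_comm]

example {d : ℕ} (A B : Matrix (Fin d) (Fin d) ℝ) (c : ℝ) :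
    toE (A - B) = toE A - toE B ∧ toE (A + B) = toE A + toE B ∧ toE (c • A) = c • toE A :=
  ⟨rfl, rfl, rfl⟩

lemma finner_self {d : ℕ} (A : Matrix (Fin d) (Fin d) ℝ) : finner A A = fnorm A ^ 2 := by
  rw [fnorm, Real.sq_sqrt (by positivity)]
  simp [finner, sq]

lemma finner_self_eq_zero {d : ℕ} (A : Matrix (Fin d) (Fin d) ℝ) :
    finner A A = 0 ↔ A = 0 := by
  rw [finner]
  constructor
  · intro h0
    ext i j
    have h1 := (Finset.sum_eq_zero_iff_of_nonneg
      (fun i _ => Finset.sum_nonneg fun j _ => mul_self_nonneg (A i j))).mp h0 i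
      (Finset.mem_univ i)
    have h2 := (Finset.sum_eq_zero_iff_of_nonneg
      (fun j _ => mul_self_nonneg (A i j))).mp h1 j (Finset.mem_univ j)
    simpa [mul_self_eq_zero] using h2
  · intro h0
    simp [h0]

/-- For `n ≥ 1` and symmetric matrices `S, R`:
`(S|S|^{1/n-1} − R|R|^{1/n-1}) : (S − R) ≥ (1/n)|S−R|² ∫₀¹ |R+θ(S−R)|^{1/n−1} dθ ≥ 0`,
and the left-hand side vanishes iff `S = R`. (Here `0·|0|^{1/n−1} = 0` holds with the
`rpow` conventions, since `0 ^ (1/n−1) = 0` for `n ≥ 2` and the exponent is `0` for `n = 1`.) -/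
theorem stmt_7 (d n : ℕ) (hd : 1 ≤ d) (hn : 1 ≤ n)
    (S R : Matrix (Fin d) (Fin d) ℝ) (hS : S.IsSymm) (hR : R.IsSymm) :
    ((1 : ℝ) / n) * fnorm (S - R) ^ 2 *
        (∫ θ in (0:ℝ)..1, fnorm (R + θ • (S - R)) ^ ((1 : ℝ) / n - 1)) ≤
      finner ((fnorm S ^ ((1 : ℝ) / n - 1)) • S - (fnorm R ^ ((1 : ℝ) / n - 1)) • R) (S - R) ∧
    0 ≤ ((1 : ℝ) / n) * fnorm (S - R) ^ 2 *
        (∫ θ in (0:ℝ)..1, fnorm (R + θ • (S - R)) ^ ((1 : ℝ) / n - 1)) ∧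
    (finner ((fnorm S ^ ((1 : ℝ) / n - 1)) • S - (fnorm R ^ ((1 : ℝ) / n - 1)) • R) (S - R) = 0
      ↔ S = R) := by
  rcases eq_or_ne S R with hSR | hSR
  · subst hSR
    have h1 : fnorm (S - S) = 0 := by simp [fnorm, sub_self]
    have h2 : ∀ X : Matrix (Fin d) (Fin d) ℝ, finner X (S - S) = 0 := by
      intro X; simp [finner, sub_self]
    rw [h1, h2]
    norm_num
  · rcases eq_or_lt_of_le hn with hn1 | hn2
    · -- n = 1
      have hn1' : n = 1 := hn1.symm
      subst hn1'
      have he : (1 : ℝ) / (1 : ℕ) - 1 = 0 := by norm_num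
      rw [he]
      simp only [Real.rpow_zero, one_smul]
      have hI : (∫ θ in (0:ℝ)..1, (1:ℝ)) = 1 := by simp
      rw [hI]
      have hc : ((1:ℝ) / (1:ℕ)) = 1 := by norm_num
      rw [hc, finner_self]
      refine ⟨le_of_eq (by ring), by positivity, ?_⟩
      rw [← finner_self, finner_self_eq_zero, sub_eq_zero]
    · -- n ≥ 2
      have hn2' : 2 ≤ n := hn2
      set p : ℝ := (1:ℝ) / n with hp_def
      have hnR : (1:ℝ) < (n:ℝ) := by exact_mod_cast hn2'
      have hp : 0 < p := by rw [hp_def]; positivity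
      have hp1 : p < 1 := by rw [hp_def, div_lt_one (by linarith)]; exact hnR
      have hxy : toE S ≠ toE R := by
        intro hc
        apply hSR
        ext i j
        exact congrFun (congrArg WithLp.ofLp hc) (i, j)
      obtain ⟨hle, hpos⟩ := key_ineq p hp hp1 (toE S) (toE R) hxy
      have hsub : toE S - toE R = toE (S - R) := rfl
      have hnsub : ‖toE S - toE R‖ = fnorm (S - R) := by rw [hsub, norm_toE]
      have hIeq : (∫ θ in (0:ℝ)..1, ‖toE R + θ • (toE S - toE R)‖ ^ (p - 1)) =
          ∫ θ in (0:ℝ)..1, fnorm (R + θ • (S - R)) ^ (p - 1) := by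
        apply integral_congr
        intro t _
        show ‖toE R + t • (toE S - toE R)‖ ^ (p - 1) = fnorm (R + t • (S - R)) ^ (p - 1)
        congr 1
        rw [show toE R + t • (toE S - toE R) = toE (R + t • (S - R)) from rfl, norm_toE]
      have hfin : finner ((fnorm S ^ (p - 1)) • S - (fnorm R ^ (p - 1)) • R) (S - R) =
          ‖toE S‖ ^ (p - 1) * ⟪toE S, toE S - toE R⟫_ℝ -
            ‖toE R‖ ^ (p - 1) * ⟪toE R, toE S - toE R⟫_ℝ := by
        rw [← inner_toE]
        rw [show toE ((fnorm S ^ (p - 1)) • S - (fnorm R ^ (p - 1)) • R)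
            = (fnorm S ^ (p - 1)) • toE S - (fnorm R ^ (p - 1)) • toE R from rfl]
        rw [hsub, inner_sub_left, real_inner_smul_left, real_inner_smul_left, ← hsub,
          norm_toE, norm_toE]
      rw [hnsub, hIeq] at hle hpos
      rw [hfin]
      refine ⟨hle, le_of_lt hpos, ?_⟩
      constructor
      · intro h0
        rw [h0] at hle
        linarith
      · intro h0
        exact absurd h0 hSR
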